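/- (Perturbation stability of decoupling under smoothing of the superoperator.) Let T and T' be completely positive superoperators from A₁⊗A₂ to B whose Choi states τ, τ' satisfy ‖τ' − τ‖₁ ≤ ε. Then for any normalized density matrix ρ^{A₁A₂R}, E_{U₁,U₂}[‖((T' − T) ⊗ I^R)((U₁ ⊗ U₂ ⊗ 1^R) ρ^{A₁A₂R} (U₁ ⊗ U₂ ⊗ 1^R)†)‖₁] ≤ ε, where the expectation is over independent Haar-random unitaries U₁ on A₁, U₂ on A₂. -/

import Mathlib

open Matrix MeasureTheory
open scoped ComplexOrder BigOperators

noncomputable section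

variable {n : Type*} [Fintype n] [DecidableEq n]

/-- Frobenius / Schatten-2 norm. -/
def frob (M : Matrix n n ℂ) : ℝ := Real.sqrt (Mᴴ * M).trace.re

/-- Trace / Schatten-1 norm. -/
def trNorm (M : Matrix n n ℂ) : ℝ :=
  (((Matrix.posSemidef_conjTranspose_mul_self M).1.eigenvectorUnitary : Matrix n n ℂ) *
    Matrix.diagonal (fun i =>
      ((Real.sqrt ((Matrix.posSemidef_conjTranspose_mul_self M).1.eigenvalues i) : ℝ) : ℂ)) *
    (star (Matrix.posSemidef_conjTranspose_mul_self M).1.eigenvectorUnitary : Matrix n n ℂ)).trace.re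

/-- Real power of a Hermitian matrix via the spectral decomposition, sending zero
eigenvalues to zero (hence Moore–Penrose pseudoinverse powers for negative exponents);
junk value `0` for non-Hermitian input. -/
def mpow (M : Matrix n n ℂ) (r : ℝ) : Matrix n n ℂ :=
  if h : M.IsHermitian then
    (h.eigenvectorUnitary : Matrix n n ℂ) *
      Matrix.diagonal (fun i =>
        ((if h.eigenvalues i = 0 then (0:ℝ) else h.eigenvalues i ^ r : ℝ) : ℂ)) *
      (h.eigenvectorUnitary : Matrix n n ℂ)ᴴ
  else 0

/-- Operator (Schatten-∞) norm. -/
def opNorm (M : Matrix n n ℂ) : ℝ := ‖(Matrix.toEuclideanLin M).toContinuousLinearMap‖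

/-- Support of a matrix, i.e. its range as a linear map. -/
def supp (M : Matrix n n ℂ) : Submodule ℂ (n → ℂ) := LinearMap.range M.mulVecLin

/-- Rényi-2 divergence (base 2). -/
def D2 (α β : Matrix n n ℂ) : ℝ :=
  2 * Real.logb 2 (frob (mpow β (-(1/4)) * α * mpow β (-(1/4))))

/-- Max (Rényi-∞) divergence (base 2). -/
def Dinf (α β : Matrix n n ℂ) : ℝ :=
  Real.logb 2 (opNorm (mpow β (-(1/2)) * α * mpow β (-(1/2))))

/-- Kronecker / tensor product of square matrices, on the product index type. -/
def kron {m : Type*} (P : Matrix n n ℂ) (Q : Matrix m m ℂ) : Matrix (n × m) (n × m) ℂ :=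
  fun z w => P z.1 w.1 * Q z.2 w.2

/-- Measurable space structure on matrices (entrywise Borel). -/
instance matrixMeasurableSpace {m n : Type*} [Fintype m] [Fintype n] :
    MeasurableSpace (Matrix m n ℂ) := by unfold Matrix; infer_instance

/-- Normalized Choi state of a superoperator, i.e.
`(T ⊗ I)(Φ^{A'A})` where `Φ` is the normalized maximally entangled state. -/
def choi {A B : Type*} [Fintype A] [DecidableEq A] [Fintype B]
    (T : Matrix A A ℂ →ₗ[ℂ] Matrix B B ℂ) : Matrix (A × B) (A × B) ℂ :=
  fun z w => ((Fintype.card A : ℂ))⁻¹ * T (Matrix.single z.1 w.1 1) z.2 w.2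

/-- `T ⊗ I^R` applied to a matrix on `A ⊗ R`. -/
def tensId {A B R : Type*} [Fintype A] [DecidableEq A] [Fintype B] [Fintype R]
    (T : Matrix A A ℂ →ₗ[ℂ] Matrix B B ℂ) (ρ : Matrix (A × R) (A × R) ℂ) :
    Matrix (B × R) (B × R) ℂ :=
  fun z w => ∑ i, ∑ j, T (Matrix.single i j 1) z.1 w.1 * ρ (i, z.2) (j, w.2)

/-- The operator `U₁ ⊗ U₂ ⊗ 1^R`. -/
def bigUR {n₁ n₂ R : Type*} [DecidableEq R] (U₁ : Matrix n₁ n₁ ℂ) (U₂ : Matrix n₂ n₂ ℂ) :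
    Matrix ((n₁ × n₂) × R) ((n₁ × n₂) × R) ℂ :=
  fun z w => U₁ z.1.1 w.1.1 * U₂ z.1.2 w.1.2 * (if z.2 = w.2 then (1:ℂ) else 0)

/-- Conjugation of a state on `A₁ ⊗ A₂ ⊗ R` by `U₁ ⊗ U₂ ⊗ 1`. -/
def conjU {n₁ n₂ R : Type*} [Fintype n₁] [Fintype n₂] [Fintype R] [DecidableEq R]
    (U₁ : Matrix n₁ n₁ ℂ) (U₂ : Matrix n₂ n₂ ℂ)
    (ρ : Matrix ((n₁ × n₂) × R) ((n₁ × n₂) × R) ℂ) :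
    Matrix ((n₁ × n₂) × R) ((n₁ × n₂) × R) ℂ :=
  bigUR U₁ U₂ * ρ * (bigUR U₁ U₂)ᴴ

/-- Partial trace over the first tensor factor. -/
def ptrFst {A R : Type*} [Fintype A] (ρ : Matrix (A × R) (A × R) ℂ) : Matrix R R ℂ :=
  fun r r' => ∑ a, ρ (a, r) (a, r')

/-! ### Auxiliary lemmas -/

section AuxTrNorm

lemma trNorm_eq_sum_sqrt (M : Matrix n n ℂ) :
    trNorm M = ∑ i, Real.sqrt ((Matrix.posSemidef_conjTranspose_mul_self M).1.eigenvalues i) := by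
  have hUU' : star ((Matrix.posSemidef_conjTranspose_mul_self M).1.eigenvectorUnitary : Matrix n n ℂ)
      * ((Matrix.posSemidef_conjTranspose_mul_self M).1.eigenvectorUnitary : Matrix n n ℂ) = 1 :=
    (Matrix.mem_unitaryGroup_iff').mp (Matrix.posSemidef_conjTranspose_mul_self M).1.eigenvectorUnitary.2
  rw [trNorm, Matrix.trace_mul_cycle, hUU', Matrix.one_mul, Matrix.trace_diagonal, Complex.re_sum]
  simp

lemma trNorm_eq_sum_abs {X : Matrix n n ℂ} (hX : X.IsHermitian) :
    trNorm X = ∑ i, |hX.eigenvalues i| := by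
  rw [trNorm_eq_sum_sqrt]
  set U : Matrix n n ℂ := (hX.eigenvectorUnitary : Matrix n n ℂ) with hU
  have hUU' : star U * U = 1 := (Matrix.mem_unitaryGroup_iff').mp hX.eigenvectorUnitary.2
  set D : Matrix n n ℂ := diagonal (fun i => ((hX.eigenvalues i : ℝ) : ℂ)) with hD
  have hXeq : X = U * D * star U := by
    have := hX.spectral_theorem
    rw [Unitary.conjStarAlgAut_apply] at this
    exact this
  have hXX : Xᴴ * X = U * (D * D) * star U := by
    rw [hX.eq]
    conv_lhs => rw [hXeq]
    calc U * D * star U * (U * D * star U) = U * D * (star U * U) * D * star U := by noncomm_ring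
      _ = _ := by rw [hUU']; noncomm_ring
  have hchar : (Xᴴ * X).charpoly
      = ∏ i, (Polynomial.X - Polynomial.C (((hX.eigenvalues i) ^ 2 : ℝ) : ℂ)) := by
    rw [hXX, charpoly_mul_comm, ← Matrix.mul_assoc, hUU', Matrix.one_mul, hD,
      diagonal_mul_diagonal, charpoly_diagonal]
    refine Finset.prod_congr rfl fun i _ => ?_
    push_cast
    ring
  have hroots := (Matrix.posSemidef_conjTranspose_mul_self X).1.roots_charpoly_eq_eigenvalues
  rw [hchar, Polynomial.roots_prod _ _
    (Finset.prod_ne_zero_iff.mpr fun i _ => Polynomial.X_sub_C_ne_zero _)] at hroots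
  simp only [Polynomial.roots_X_sub_C, Multiset.bind_singleton] at hroots
  have key := congrArg (fun s : Multiset ℂ => (s.map (fun z => Real.sqrt z.re)).sum) hroots
  simp only [Multiset.map_map, Function.comp_def] at key
  rw [Finset.sum_eq_multiset_sum, Finset.sum_eq_multiset_sum]
  convert key.symm using 3
  · simp
  · rw [Complex.ofReal_re, Real.sqrt_sq_eq_abs]

lemma psd_factor {m : Type*} [Fintype m] [DecidableEq m] {C : Matrix m m ℂ} (hC : C.PosSemidef) :
    ∃ S : Matrix m m ℂ, S * Sᴴ = C := by
  refine ⟨(hC.1.eigenvectorUnitary : Matrix m m ℂ) *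
    diagonal (fun i => ((Real.sqrt (hC.1.eigenvalues i) : ℝ) : ℂ)), ?_⟩
  have hCeq := hC.1.spectral_theorem
  rw [Unitary.conjStarAlgAut_apply] at hCeq
  conv_rhs => rw [hCeq]
  rw [Matrix.conjTranspose_mul, diagonal_conjTranspose, Matrix.mul_assoc, ← Matrix.mul_assoc (diagonal _),
    diagonal_mul_diagonal, ← Matrix.mul_assoc, Matrix.star_eq_conjTranspose]
  congr 3
  funext i
  simp only [Pi.star_apply, Function.comp_apply, Complex.star_def, Complex.conj_ofReal]
  rw [← Complex.ofReal_mul, Real.mul_self_sqrt (hC.eigenvalues_nonneg i)]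
  rfl

lemma sum_dot_eq_trace {X : Matrix n n ℂ} (hX : X.IsHermitian) (A : Matrix n n ℂ) :
    ∑ i, dotProduct (star ⇑(hX.eigenvectorBasis i)) (A *ᵥ ⇑(hX.eigenvectorBasis i))
      = A.trace := by
  set U : Matrix n n ℂ := (hX.eigenvectorUnitary : Matrix n n ℂ) with hU
  have hUU : U * star U = 1 := (Matrix.mem_unitaryGroup_iff).mp hX.eigenvectorUnitary.2
  have hcell : ∀ i, dotProduct (star ⇑(hX.eigenvectorBasis i))
      (A *ᵥ ⇑(hX.eigenvectorBasis i)) = (star U * A * U) i i := by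
    intro i
    have hv : ∀ p, (⇑(hX.eigenvectorBasis i) : n → ℂ) p = U p i := by
      intro p
      rw [hU]
      exact (hX.eigenvectorUnitary_apply p i).symm
    simp only [Matrix.mul_apply, Matrix.mulVec, dotProduct, Pi.star_apply,
      Matrix.star_apply, Finset.sum_mul, Finset.mul_sum, hv]
    rw [Finset.sum_comm]
    refine Finset.sum_congr rfl fun q _ => Finset.sum_congr rfl fun p _ => ?_
    ring
  rw [Finset.sum_congr rfl (fun i _ => hcell i)]
  have : ∑ i, (star U * A * U) i i = (star U * A * U).trace := rfl
  rw [this, Matrix.trace_mul_cycle, hUU, Matrix.one_mul]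

lemma trNorm_sub_le {A B : Matrix n n ℂ} (hA : A.PosSemidef) (hB : B.PosSemidef) :
    trNorm (A - B) ≤ A.trace.re + B.trace.re := by
  have hX : (A - B).IsHermitian := hA.1.sub hB.1
  rw [trNorm_eq_sum_abs hX]
  have key : ∀ i, |hX.eigenvalues i| ≤
      (dotProduct (star ⇑(hX.eigenvectorBasis i)) (A *ᵥ ⇑(hX.eigenvectorBasis i))).re
      + (dotProduct (star ⇑(hX.eigenvectorBasis i)) (B *ᵥ ⇑(hX.eigenvectorBasis i))).re := by
    intro i
    have hev := hX.eigenvalues_eq i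
    have ha := hA.re_dotProduct_nonneg (⇑(hX.eigenvectorBasis i))
    have hb := hB.re_dotProduct_nonneg (⇑(hX.eigenvectorBasis i))
    have hsplit : hX.eigenvalues i =
        (dotProduct (star ⇑(hX.eigenvectorBasis i)) (A *ᵥ ⇑(hX.eigenvectorBasis i))).re
        - (dotProduct (star ⇑(hX.eigenvectorBasis i)) (B *ᵥ ⇑(hX.eigenvectorBasis i))).re := by
      rw [hev, Matrix.sub_mulVec, dotProduct_sub]
      simp [Complex.sub_re]
    rw [hsplit]
    refine (abs_sub _ _).trans ?_
    rw [abs_of_nonneg (by simpa using ha), abs_of_nonneg (by simpa using hb)]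
  calc ∑ i, |hX.eigenvalues i| ≤ ∑ i,
      ((dotProduct (star ⇑(hX.eigenvectorBasis i)) (A *ᵥ ⇑(hX.eigenvectorBasis i))).re
      + (dotProduct (star ⇑(hX.eigenvectorBasis i)) (B *ᵥ ⇑(hX.eigenvectorBasis i))).re) :=
        Finset.sum_le_sum fun i _ => key i
    _ = A.trace.re + B.trace.re := by
        rw [Finset.sum_add_distrib, ← Complex.re_sum, ← Complex.re_sum,
          sum_dot_eq_trace hX A, sum_dot_eq_trace hX B]

lemma psd_diag_re_nonneg {M : Matrix n n ℂ} (hM : M.PosSemidef) (i : n) :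
    0 ≤ (M i i).re := by
  have h := hM.dotProduct_mulVec_nonneg (Pi.single i 1)
  have hval : dotProduct (star (Pi.single i 1)) (M *ᵥ (Pi.single i 1)) = M i i := by
    rw [Matrix.mulVec_single, dotProduct]
    rw [Finset.sum_eq_single i]
    · simp
    · intro b _ hb; simp [Pi.single_apply, hb]
    · intro h; exact absurd (Finset.mem_univ i) h
  rw [hval] at h
  have := Complex.le_def.mp h
  simpa using this.1

lemma psd_trace_re_nonneg {M : Matrix n n ℂ} (hM : M.PosSemidef) : 0 ≤ M.trace.re := by
  rw [Matrix.trace, Complex.re_sum]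
  exact Finset.sum_nonneg fun i _ => psd_diag_re_nonneg hM i

lemma trNorm_nonneg (M : Matrix n n ℂ) : 0 ≤ trNorm M := by
  rw [trNorm_eq_sum_sqrt]; exact Finset.sum_nonneg fun i _ => Real.sqrt_nonneg _

lemma posneg_decomp {Δ : Matrix n n ℂ} (hΔ : Δ.IsHermitian) :
    ∃ P N : Matrix n n ℂ, P.PosSemidef ∧ N.PosSemidef ∧ P - N = Δ ∧
      P.trace.re + N.trace.re = trNorm Δ := by
  set U : Matrix n n ℂ := (hΔ.eigenvectorUnitary : Matrix n n ℂ) with hU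
  have hUU : U * star U = 1 := (Matrix.mem_unitaryGroup_iff).mp hΔ.eigenvectorUnitary.2
  have hUU' : star U * U = 1 := (Matrix.mem_unitaryGroup_iff').mp hΔ.eigenvectorUnitary.2
  set lam := hΔ.eigenvalues with hlam
  refine ⟨U * diagonal (fun k => ((max (lam k) 0 : ℝ) : ℂ)) * star U,
          U * diagonal (fun k => ((max (-(lam k)) 0 : ℝ) : ℂ)) * star U, ?_, ?_, ?_, ?_⟩
  · have hd : (diagonal (fun k => ((max (lam k) 0 : ℝ) : ℂ))).PosSemidef := by
      refine PosSemidef.diagonal fun k => ?_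
      simp only [Pi.zero_apply]
      exact_mod_cast le_max_right _ _
    simpa [Matrix.star_eq_conjTranspose] using hd.mul_mul_conjTranspose_same U
  · have hd : (diagonal (fun k => ((max (-(lam k)) 0 : ℝ) : ℂ))).PosSemidef := by
      refine PosSemidef.diagonal fun k => ?_
      simp only [Pi.zero_apply]
      exact_mod_cast le_max_right _ _
    simpa [Matrix.star_eq_conjTranspose] using hd.mul_mul_conjTranspose_same U
  · have h1 : U * diagonal (fun k => ((max (lam k) 0 : ℝ) : ℂ)) * star U
        - U * diagonal (fun k => ((max (-(lam k)) 0 : ℝ) : ℂ)) * star U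
        = U * (diagonal (fun k => ((max (lam k) 0 : ℝ) : ℂ))
            - diagonal (fun k => ((max (-(lam k)) 0 : ℝ) : ℂ))) * star U := by
      noncomm_ring
    rw [h1, Matrix.diagonal_sub]
    have hdiag : (fun k => ((max (lam k) 0 : ℝ) : ℂ) - ((max (-(lam k)) 0 : ℝ) : ℂ))
        = fun k => ((lam k : ℝ) : ℂ) := by
      funext k
      rw [← Complex.ofReal_sub]
      congr 1
      rcases le_or_gt 0 (lam k) with h | h
      · rw [max_eq_left h, max_eq_right (by linarith)]; ring
      · rw [max_eq_right (le_of_lt h), max_eq_left (by linarith)]; ring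
    rw [show (diagonal fun i => ((max (lam i) 0 : ℝ) : ℂ) - ((max (-(lam i)) 0 : ℝ) : ℂ))
        = diagonal (fun k => ((lam k : ℝ) : ℂ)) from congrArg diagonal hdiag]
    have hsp := hΔ.spectral_theorem
    rw [Unitary.conjStarAlgAut_apply] at hsp
    exact hsp.symm
  · have htr : ∀ g : n → ℝ, (U * diagonal (fun k => ((g k : ℝ) : ℂ)) * star U).trace.re
        = ∑ k, g k := by
      intro g
      rw [Matrix.trace_mul_cycle, hUU', Matrix.one_mul, Matrix.trace_diagonal, Complex.re_sum]
      simp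
    rw [htr, htr, trNorm_eq_sum_abs hΔ, ← Finset.sum_add_distrib]
    refine Finset.sum_congr rfl fun k _ => ?_
    rcases le_or_gt 0 (lam k) with h | h
    · rw [max_eq_left h, max_eq_right (by linarith), abs_of_nonneg h]; ring
    · rw [max_eq_right (le_of_lt h), max_eq_left (by linarith), abs_of_neg h]; ring

end AuxTrNorm

section AuxSwaps

variable {α β γ δ M : Type*} [Fintype α] [Fintype β] [Fintype γ] [Fintype δ] [AddCommMonoid M]

lemma swap12 (t : α → β → γ → δ → M) :
    ∑ a, ∑ b, ∑ c, ∑ d, t a b c d = ∑ b, ∑ a, ∑ c, ∑ d, t a b c d := Finset.sum_comm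

lemma swap23 (t : α → β → γ → δ → M) :
    ∑ a, ∑ b, ∑ c, ∑ d, t a b c d = ∑ a, ∑ c, ∑ b, ∑ d, t a b c d :=
  Finset.sum_congr rfl fun a _ => Finset.sum_comm

lemma swap34 (t : α → β → γ → δ → M) :
    ∑ a, ∑ b, ∑ c, ∑ d, t a b c d = ∑ a, ∑ b, ∑ d, ∑ c, t a b c d :=
  Finset.sum_congr rfl fun a _ => Finset.sum_congr rfl fun b _ => Finset.sum_comm

lemma reorder4 (t : α → β → γ → δ → M) :
    ∑ a, ∑ b, ∑ c, ∑ d, t a b c d = ∑ b, ∑ d, ∑ a, ∑ c, t a b c d :=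
  calc ∑ a, ∑ b, ∑ c, ∑ d, t a b c d
      = ∑ b, ∑ a, ∑ c, ∑ d, t a b c d := swap12 _
    _ = ∑ b, ∑ c, ∑ a, ∑ d, t a b c d := swap23 _
    _ = ∑ b, ∑ c, ∑ d, ∑ a, t a b c d := swap34 _
    _ = ∑ b, ∑ d, ∑ c, ∑ a, t a b c d := swap23 _
    _ = ∑ b, ∑ d, ∑ a, ∑ c, t a b c d := swap34 _

lemma swap12₃ {α β γ M : Type*} [Fintype α] [Fintype β] [Fintype γ] [AddCommMonoid M]
    (t : α → β → γ → M) :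
    ∑ a, ∑ b, ∑ c, t a b c = ∑ b, ∑ a, ∑ c, t a b c := Finset.sum_comm

lemma swap23₃ {α β γ M : Type*} [Fintype α] [Fintype β] [Fintype γ] [AddCommMonoid M]
    (t : α → β → γ → M) :
    ∑ a, ∑ b, ∑ c, t a b c = ∑ a, ∑ c, ∑ b, t a b c :=
  Finset.sum_congr rfl fun a _ => Finset.sum_comm

end AuxSwaps

section AuxTwirl

lemma measurable_entry (i j : n) :
    Measurable (fun U : Matrix.unitaryGroup n ℂ => (U : Matrix n n ℂ) i j) := by
  have h1 : Measurable (fun U : Matrix.unitaryGroup n ℂ => (U : Matrix n n ℂ)) :=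
    measurable_subtype_coe
  exact ((measurable_pi_apply j).comp ((measurable_pi_apply i))).comp h1

lemma unitary_entry_norm_le (U : Matrix.unitaryGroup n ℂ) (i j : n) :
    ‖(U : Matrix n n ℂ) i j‖ ≤ 1 := by
  have h := (Matrix.mem_unitaryGroup_iff).mp U.2
  have h2 : ((U : Matrix n n ℂ) * star (U : Matrix n n ℂ)) i i = 1 := by
    rw [h]; simp
  rw [Matrix.mul_apply] at h2
  have h3 : ∑ k, Complex.normSq ((U : Matrix n n ℂ) i k) = 1 := by
    have : ∑ k, ((Complex.normSq ((U : Matrix n n ℂ) i k) : ℂ)) = 1 := by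
      rw [← h2]
      refine Finset.sum_congr rfl fun k _ => ?_
      rw [Matrix.star_apply, ← Complex.mul_conj]
      rfl
    exact_mod_cast this
  have h4 : Complex.normSq ((U : Matrix n n ℂ) i j) ≤ 1 := by
    rw [← h3]
    exact Finset.single_le_sum (fun k _ => Complex.normSq_nonneg _) (Finset.mem_univ j)
  rw [← Complex.sq_norm] at h4
  nlinarith [norm_nonneg ((U : Matrix n n ℂ) i j)]

lemma measurable_conjEntry (A : Matrix n n ℂ) (i j : n) :
    Measurable (fun U : Matrix.unitaryGroup n ℂ =>
      ((U : Matrix n n ℂ) * A * star (U : Matrix n n ℂ)) i j) := by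
  have : (fun U : Matrix.unitaryGroup n ℂ =>
      ((U : Matrix n n ℂ) * A * star (U : Matrix n n ℂ)) i j)
      = fun U : Matrix.unitaryGroup n ℂ =>
        ∑ q, (∑ p, (U : Matrix n n ℂ) i p * A p q) * star ((U : Matrix n n ℂ) j q) := by
    funext U
    rw [Matrix.mul_apply]
    exact Finset.sum_congr rfl fun q _ => by rw [Matrix.mul_apply, Matrix.star_apply]
  rw [this]
  refine Finset.measurable_sum _ fun q _ => Measurable.mul ?_ ?_
  · exact Finset.measurable_sum _ fun p _ => (measurable_entry i p).mul measurable_const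
  · exact continuous_star.measurable.comp (measurable_entry j q)

lemma norm_conjEntry_le (A : Matrix n n ℂ) (i j : n) (U : Matrix.unitaryGroup n ℂ) :
    ‖((U : Matrix n n ℂ) * A * star (U : Matrix n n ℂ)) i j‖ ≤ ∑ q, ∑ p, ‖A p q‖ := by
  rw [Matrix.mul_apply]
  refine (norm_sum_le _ _).trans ?_
  refine Finset.sum_le_sum fun q _ => ?_
  rw [norm_mul]
  refine le_trans (mul_le_of_le_one_right (norm_nonneg _) ?_) ?_
  · rw [Matrix.star_apply, norm_star]
    exact unitary_entry_norm_le U j q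
  · rw [Matrix.mul_apply]
    refine (norm_sum_le _ _).trans (Finset.sum_le_sum fun p _ => ?_)
    rw [norm_mul]
    exact mul_le_of_le_one_left (norm_nonneg _) (unitary_entry_norm_le U i p)

lemma integrable_conjEntry (μ : Measure (Matrix.unitaryGroup n ℂ)) [IsProbabilityMeasure μ]
    (A : Matrix n n ℂ) (i j : n) :
    Integrable (fun U : Matrix.unitaryGroup n ℂ =>
      ((U : Matrix n n ℂ) * A * star (U : Matrix n n ℂ)) i j) μ := by
  refine (integrable_const (∑ q, ∑ p, ‖A p q‖)).mono'
    (measurable_conjEntry A i j).aestronglyMeasurable ?_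
  refine Filter.Eventually.of_forall fun U => ?_
  simpa using norm_conjEntry_le A i j U

lemma conj_entry_expand (V Y : Matrix n n ℂ) (a b : n) :
    (V * Y * star V) a b = ∑ q, ∑ p, V a p * Y p q * star (V b q) := by
  rw [Matrix.mul_apply]
  refine Finset.sum_congr rfl fun q _ => ?_
  rw [Matrix.mul_apply, Matrix.star_apply, Finset.sum_mul]

lemma twirl (μ : Measure (Matrix.unitaryGroup n ℂ)) [IsProbabilityMeasure μ]
    (hμ : ∀ V : Matrix.unitaryGroup n ℂ, μ.map (fun U => V * U) = μ)
    (A : Matrix n n ℂ) (i j : n) :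
    ∫ U, ((U : Matrix n n ℂ) * A * star (U : Matrix n n ℂ)) i j ∂μ
      = if i = j then A.trace / (Fintype.card n : ℂ) else 0 := by
  haveI : Nonempty n := ⟨i⟩
  set f : n → n → Matrix.unitaryGroup n ℂ → ℂ := fun a b U =>
    ((U : Matrix n n ℂ) * A * star (U : Matrix n n ℂ)) a b with hf
  set M : Matrix n n ℂ := Matrix.of (fun a b => ∫ U, f a b U ∂μ) with hM
  have hmul_meas : ∀ V : Matrix.unitaryGroup n ℂ,
      Measurable (fun U : Matrix.unitaryGroup n ℂ => V * U) := by
    intro V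
    refine Measurable.subtype_mk ?_
    refine measurable_pi_lambda _ fun a => measurable_pi_lambda _ fun b => ?_
    have : (fun U : Matrix.unitaryGroup n ℂ => ((V : Matrix n n ℂ) * (U : Matrix n n ℂ)) a b)
        = fun U : Matrix.unitaryGroup n ℂ => ∑ k, (V : Matrix n n ℂ) a k * (U : Matrix n n ℂ) k b := by
      funext U; rw [Matrix.mul_apply]
    exact this ▸ Finset.measurable_sum _ fun k _ => measurable_const.mul (measurable_entry k b)
  have inv : ∀ V : Matrix.unitaryGroup n ℂ,
      (V : Matrix n n ℂ) * M * star (V : Matrix n n ℂ) = M := by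
    intro V
    ext a b
    rw [conj_entry_expand]
    have step1 : ∀ q p : n, (V : Matrix n n ℂ) a p * (M p q) * star ((V : Matrix n n ℂ) b q)
        = ∫ U, (V : Matrix n n ℂ) a p * f p q U * star ((V : Matrix n n ℂ) b q) ∂μ := by
      intro q p
      rw [hM]
      show (V : Matrix n n ℂ) a p * (∫ U, f p q U ∂μ) * star ((V : Matrix n n ℂ) b q) = _
      rw [← integral_const_mul, ← integral_mul_const]
    have hsum : ∑ q, ∑ p, (V : Matrix n n ℂ) a p * (M p q) * star ((V : Matrix n n ℂ) b q)
        = ∫ U, ∑ q, ∑ p, (V : Matrix n n ℂ) a p * f p q U * star ((V : Matrix n n ℂ) b q) ∂μ := by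
      have hq : ∀ q : n, ∑ p, (V : Matrix n n ℂ) a p * (M p q) * star ((V : Matrix n n ℂ) b q)
          = ∫ U, ∑ p, (V : Matrix n n ℂ) a p * f p q U * star ((V : Matrix n n ℂ) b q) ∂μ := by
        intro q
        rw [Finset.sum_congr rfl fun p _ => step1 q p]
        exact (integral_finset_sum _ fun p _ =>
          ((integrable_conjEntry μ A p q).const_mul _).mul_const _).symm
      rw [Finset.sum_congr rfl fun q _ => hq q]
      exact (integral_finset_sum _ fun q _ => integrable_finset_sum _ fun p _ =>
        ((integrable_conjEntry μ A p q).const_mul _).mul_const _).symm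
    rw [hsum]
    have hinside : ∀ U : Matrix.unitaryGroup n ℂ,
        ∑ q, ∑ p, (V : Matrix n n ℂ) a p * f p q U * star ((V : Matrix n n ℂ) b q)
        = f a b (V * U) := by
      intro U
      rw [← conj_entry_expand]
      show ((V : Matrix n n ℂ) * ((U : Matrix n n ℂ) * A * star (U : Matrix n n ℂ))
          * star (V : Matrix n n ℂ)) a b = (((V * U : Matrix.unitaryGroup n ℂ) : Matrix n n ℂ) * A
          * star ((V * U : Matrix.unitaryGroup n ℂ) : Matrix n n ℂ)) a b
      have hcoe : ((V * U : Matrix.unitaryGroup n ℂ) : Matrix n n ℂ)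
          = (V : Matrix n n ℂ) * (U : Matrix n n ℂ) := rfl
      rw [hcoe, Matrix.star_mul]
      congr 1
      noncomm_ring
    rw [integral_congr_ae (Filter.Eventually.of_forall hinside)]
    have hmap := integral_map (μ := μ) (hmul_meas V).aemeasurable
      ((measurable_conjEntry A a b).aestronglyMeasurable
        (μ := Measure.map (fun U => V * U) μ))
    rw [← hmap, hμ V]
    rfl
  have diag0 : ∀ a b : n, a ≠ b → M a b = 0 := by
    intro a b hab
    set d : n → ℂ := fun k => if k = b then (-1:ℂ) else 1 with hd
    have hmem : Matrix.diagonal d ∈ Matrix.unitaryGroup n ℂ := by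
      rw [Matrix.mem_unitaryGroup_iff, Matrix.star_eq_conjTranspose,
        Matrix.diagonal_conjTranspose, Matrix.diagonal_mul_diagonal]
      have : (fun k => d k * (star d) k) = fun _ => (1:ℂ) := by
        funext k
        simp only [Pi.star_apply, hd]
        by_cases hk : k = b <;> simp [hk]
      rw [show (fun i => d i * (star d) i) = fun k => d k * (star d) k from rfl, this,
        Matrix.diagonal_one]
    have h := inv ⟨Matrix.diagonal d, hmem⟩
    have h2 := congrFun (congrFun h a) b
    have hstar : star (Matrix.diagonal d) = Matrix.diagonal (star d) := by
      rw [Matrix.star_eq_conjTranspose, Matrix.diagonal_conjTranspose]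
    rw [show ((⟨Matrix.diagonal d, hmem⟩ : Matrix.unitaryGroup n ℂ) : Matrix n n ℂ)
        = Matrix.diagonal d from rfl] at h2
    rw [hstar, Matrix.mul_diagonal, Matrix.diagonal_mul] at h2
    have h3 : -(M a b) = M a b := by
      have ha : d a = 1 := by simp [hd, hab]
      have hb : (star d) b = -1 := by simp [hd, Pi.star_apply]
      rw [ha, hb] at h2
      calc -(M a b) = 1 * M a b * -1 := by ring
        _ = M a b := h2
    linear_combination (-(1:ℂ)/2) * h3
  have diageq : ∀ a b : n, M a a = M b b := by
    intro a b
    rcases eq_or_ne a b with rfl | hab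
    · rfl
    set σ : Equiv.Perm n := Equiv.swap a b with hσ
    set P : Matrix n n ℂ := Matrix.of (fun p q => if q = σ p then (1:ℂ) else 0) with hP
    have hPstar : ∀ p q, (star P) p q = if p = σ q then (1:ℂ) else 0 := by
      intro p q
      rw [Matrix.star_apply, hP]
      simp only [Matrix.of_apply]
      split <;> simp
    have hmem : P ∈ Matrix.unitaryGroup n ℂ := by
      rw [Matrix.mem_unitaryGroup_iff]
      ext p q
      rw [Matrix.mul_apply]
      have : ∀ c, P p c * (star P) c q = if c = σ p then (if c = σ q then (1:ℂ) else 0) else 0 := by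
        intro c
        rw [hPstar, hP]
        simp only [Matrix.of_apply]
        by_cases h1 : c = σ p <;> by_cases h2 : c = σ q <;>
          simp_all
      rw [Finset.sum_congr rfl fun c _ => this c, Finset.sum_ite_eq' Finset.univ (σ p)]
      simp only [Finset.mem_univ, if_true, Matrix.one_apply]
      by_cases hpq : p = q
      · simp [hpq]
      · have : σ p ≠ σ q := fun h => hpq (σ.injective h)
        simp [this, hpq]
    have h := inv ⟨P, hmem⟩
    have h2 := congrFun (congrFun h a) a
    rw [show ((⟨P, hmem⟩ : Matrix.unitaryGroup n ℂ) : Matrix n n ℂ) = P from rfl] at h2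
    have hPM : ∀ p q, (P * M) p q = M (σ p) q := by
      intro p q
      rw [Matrix.mul_apply]
      have : ∀ c, P p c * M c q = if c = σ p then M c q else 0 := by
        intro c
        rw [hP]; simp only [Matrix.of_apply]
        by_cases h1 : c = σ p <;> simp [h1]
      rw [Finset.sum_congr rfl fun c _ => this c, Finset.sum_ite_eq' Finset.univ (σ p)]
      simp
    have hleft : (P * M * star P) a a = M (σ a) (σ a) := by
      rw [Matrix.mul_apply]
      have : ∀ c, (P * M) a c * (star P) c a = if c = σ a then M (σ a) c else 0 := by
        intro c
        rw [hPM, hPstar]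
        by_cases h1 : c = σ a <;> simp [h1]
      rw [Finset.sum_congr rfl fun c _ => this c, Finset.sum_ite_eq' Finset.univ (σ a)]
      simp
    rw [hleft] at h2
    have hσa : σ a = b := Equiv.swap_apply_left a b
    rw [hσa] at h2
    exact h2.symm
  have htr : ∑ k, M k k = A.trace := by
    have h1 : ∀ k, M k k = ∫ U, f k k U ∂μ := fun k => rfl
    rw [Finset.sum_congr rfl fun k _ => h1 k, ← integral_finset_sum _
      (fun k _ => integrable_conjEntry μ A k k)]
    have h2 : ∀ U : Matrix.unitaryGroup n ℂ, ∑ k, f k k U = A.trace := by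
      intro U
      have : ∑ k, f k k U = ((U : Matrix n n ℂ) * A * star (U : Matrix n n ℂ)).trace := rfl
      rw [this, Matrix.trace_mul_cycle,
        (Matrix.mem_unitaryGroup_iff').mp U.2, Matrix.one_mul]
    rw [integral_congr_ae (Filter.Eventually.of_forall h2)]
    simp
  rw [show (∫ U, ((U : Matrix n n ℂ) * A * star (U : Matrix n n ℂ)) i j ∂μ) = M i j from rfl]
  by_cases hij : i = j
  · subst hij
    have hall : ∑ k, M k k = (Fintype.card n : ℂ) * M i i := by
      rw [Finset.sum_congr rfl fun k _ => diageq k i]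
      simp [Finset.card_univ, mul_comm]
    rw [hall] at htr
    have hcard : (Fintype.card n : ℂ) ≠ 0 := by
      exact_mod_cast Fintype.card_ne_zero
    simp only [if_true]
    field_simp [hcard] at htr ⊢
    linear_combination htr
  · simp only [hij, if_false]
    exact diag0 i j hij

end AuxTwirl

section AuxTensC

variable {A B R : Type*} [Fintype A] [DecidableEq A] [Fintype B] [DecidableEq B]
  [Fintype R] [DecidableEq R]

/-- `(O ⊗ I)(σ)` written directly in terms of the (unnormalized) Choi matrix. -/
def tensC (C : Matrix (A × B) (A × B) ℂ) (σ : Matrix (A × R) (A × R) ℂ) :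
    Matrix (B × R) (B × R) ℂ :=
  Matrix.of fun z w => (Fintype.card A : ℂ) * ∑ i, ∑ j, C (i, z.1) (j, w.1) * σ (i, z.2) (j, w.2)

lemma tensId_eq_tensC_choi (T : Matrix A A ℂ →ₗ[ℂ] Matrix B B ℂ)
    (σ : Matrix (A × R) (A × R) ℂ) : tensId T σ = tensC (choi T) σ := by
  funext z w
  show (∑ i, ∑ j, T (Matrix.single i j 1) z.1 w.1 * σ (i, z.2) (j, w.2))
      = (Fintype.card A : ℂ) * ∑ i, ∑ j,
        ((Fintype.card A : ℂ))⁻¹ * T (Matrix.single i j 1) z.1 w.1 * σ (i, z.2) (j, w.2)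
  rcases isEmpty_or_nonempty A with hA | hA
  · simp
  · have hcard : (Fintype.card A : ℂ) ≠ 0 := by exact_mod_cast Fintype.card_ne_zero
    rw [Finset.mul_sum]
    refine Finset.sum_congr rfl fun i _ => ?_
    rw [Finset.mul_sum]
    refine Finset.sum_congr rfl fun j _ => ?_
    field_simp

lemma choi_sub (T T' : Matrix A A ℂ →ₗ[ℂ] Matrix B B ℂ) :
    choi (T' - T) = choi T' - choi T := by
  funext z w
  show ((Fintype.card A : ℂ))⁻¹ * (T' - T) (Matrix.single z.1 w.1 1) z.2 w.2
      = choi T' z w - choi T z w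
  rw [LinearMap.sub_apply, Matrix.sub_apply]
  show _ = ((Fintype.card A : ℂ))⁻¹ * T' _ z.2 w.2 - ((Fintype.card A : ℂ))⁻¹ * T _ z.2 w.2
  ring

lemma tensC_sub (C C' : Matrix (A × B) (A × B) ℂ) (σ : Matrix (A × R) (A × R) ℂ) :
    tensC (C' - C) σ = tensC C' σ - tensC C σ := by
  funext z w
  show (Fintype.card A : ℂ) * ∑ i, ∑ j, (C' - C) (i, z.1) (j, w.1) * σ (i, z.2) (j, w.2)
      = tensC C' σ z w - tensC C σ z w
  show _ = (Fintype.card A : ℂ) * (∑ i, ∑ j, C' (i, z.1) (j, w.1) * σ (i, z.2) (j, w.2))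
      - (Fintype.card A : ℂ) * (∑ i, ∑ j, C (i, z.1) (j, w.1) * σ (i, z.2) (j, w.2))
  rw [← mul_sub, ← Finset.sum_sub_distrib]
  congr 1
  refine Finset.sum_congr rfl fun i _ => ?_
  rw [← Finset.sum_sub_distrib]
  refine Finset.sum_congr rfl fun j _ => ?_
  rw [Matrix.sub_apply]
  ring

lemma psd_real_smul {m : Type*} [Fintype m] {M : Matrix m m ℂ} (hM : M.PosSemidef)
    {c : ℝ} (hc : 0 ≤ c) : ((c : ℂ) • M).PosSemidef := by
  exact hM.smul (by exact_mod_cast hc)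

lemma tensC_psd {C : Matrix (A × B) (A × B) ℂ} {σ : Matrix (A × R) (A × R) ℂ}
    (hC : C.PosSemidef) (hσ : σ.PosSemidef) : (tensC C σ).PosSemidef := by
  obtain ⟨Sc, hSc⟩ := psd_factor hC
  obtain ⟨Ss, hSs⟩ := psd_factor hσ
  have hCfac : ∀ p q, C p q = ∑ k, Sc p k * star (Sc q k) := by
    intro p q
    rw [← hSc, Matrix.mul_apply]
    rfl
  have hσfac : ∀ p q, σ p q = ∑ l, Ss p l * star (Ss q l) := by
    intro p q
    rw [← hSs, Matrix.mul_apply]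
    rfl
  set Y : Matrix (B × R) ((A × B) × (A × R)) ℂ :=
    Matrix.of (fun z kl => ∑ a, Sc (a, z.1) kl.1 * Ss (a, z.2) kl.2) with hY
  have hfac : tensC C σ = ((Fintype.card A : ℝ) : ℂ) • (Y * Yᴴ) := by
    funext z w
    show (Fintype.card A : ℂ) * ∑ i, ∑ j, C (i, z.1) (j, w.1) * σ (i, z.2) (j, w.2)
        = ((Fintype.card A : ℝ) : ℂ) * (Y * Yᴴ) z w
    have hcoe : ((Fintype.card A : ℝ) : ℂ) = (Fintype.card A : ℂ) := by push_cast; rfl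
    rw [hcoe]
    congr 1
    have main : ∑ i, ∑ j, C (i, z.1) (j, w.1) * σ (i, z.2) (j, w.2)
        = ∑ k, ∑ l, ∑ i, ∑ j,
            (Sc (i, z.1) k * star (Sc (j, w.1) k)) * (Ss (i, z.2) l * star (Ss (j, w.2) l)) := by
      calc ∑ i, ∑ j, C (i, z.1) (j, w.1) * σ (i, z.2) (j, w.2)
          = ∑ i, ∑ j, ∑ k, ∑ l,
            (Sc (i, z.1) k * star (Sc (j, w.1) k)) * (Ss (i, z.2) l * star (Ss (j, w.2) l)) := by
            refine Finset.sum_congr rfl fun i _ => Finset.sum_congr rfl fun j _ => ?_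
            rw [hCfac, hσfac, Finset.sum_mul_sum]
        _ = ∑ i, ∑ k, ∑ j, ∑ l,
            (Sc (i, z.1) k * star (Sc (j, w.1) k)) * (Ss (i, z.2) l * star (Ss (j, w.2) l)) :=
            swap23 _
        _ = ∑ k, ∑ i, ∑ j, ∑ l,
            (Sc (i, z.1) k * star (Sc (j, w.1) k)) * (Ss (i, z.2) l * star (Ss (j, w.2) l)) :=
            swap12 _
        _ = ∑ k, ∑ i, ∑ l, ∑ j,
            (Sc (i, z.1) k * star (Sc (j, w.1) k)) * (Ss (i, z.2) l * star (Ss (j, w.2) l)) :=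
            swap34 _
        _ = ∑ k, ∑ l, ∑ i, ∑ j,
            (Sc (i, z.1) k * star (Sc (j, w.1) k)) * (Ss (i, z.2) l * star (Ss (j, w.2) l)) :=
            swap23 _
    rw [main]
    conv_rhs => rw [Matrix.mul_apply, Fintype.sum_prod_type]
    refine Finset.sum_congr rfl fun k _ => Finset.sum_congr rfl fun l _ => ?_
    rw [hY]
    show _ = (∑ a, Sc (a, z.1) k * Ss (a, z.2) l) * (Yᴴ) (k, l) w
    rw [Matrix.conjTranspose_apply]
    show _ = (∑ a, Sc (a, z.1) k * Ss (a, z.2) l) * star (∑ b, Sc (b, w.1) k * Ss (b, w.2) l)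
    rw [star_sum, Finset.sum_mul_sum]
    refine Finset.sum_congr rfl fun i _ => Finset.sum_congr rfl fun j _ => ?_
    rw [star_mul']
    ring
  rw [hfac]
  exact psd_real_smul (Matrix.posSemidef_self_mul_conjTranspose Y) (by positivity)

lemma tensC_trace (C : Matrix (A × B) (A × B) ℂ) (σ : Matrix (A × R) (A × R) ℂ) :
    (tensC C σ).trace = (Fintype.card A : ℂ) *
      ∑ i, ∑ j, (∑ b, C (i, b) (j, b)) * (∑ r, σ (i, r) (j, r)) := by
  rw [Matrix.trace]
  have h1 : ∀ z : B × R, (tensC C σ).diag z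
      = (Fintype.card A : ℂ) * ∑ i, ∑ j, C (i, z.1) (j, z.1) * σ (i, z.2) (j, z.2) := fun z => rfl
  rw [Finset.sum_congr rfl fun z _ => h1 z, ← Finset.mul_sum]
  congr 1
  rw [Fintype.sum_prod_type]
  calc ∑ b, ∑ r, ∑ i, ∑ j, C (i, b) (j, b) * σ (i, r) (j, r)
      = ∑ b, ∑ i, ∑ r, ∑ j, C (i, b) (j, b) * σ (i, r) (j, r) := swap23 _
    _ = ∑ i, ∑ b, ∑ r, ∑ j, C (i, b) (j, b) * σ (i, r) (j, r) := swap12 _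
    _ = ∑ i, ∑ b, ∑ j, ∑ r, C (i, b) (j, b) * σ (i, r) (j, r) := swap34 _
    _ = ∑ i, ∑ j, ∑ b, ∑ r, C (i, b) (j, b) * σ (i, r) (j, r) := swap23 _
    _ = _ := by
        refine Finset.sum_congr rfl fun i _ => Finset.sum_congr rfl fun j _ => ?_
        rw [Finset.sum_mul_sum]

end AuxTensC

section AuxEta

variable {n₁ n₂ R : Type*} [Fintype n₁] [DecidableEq n₁] [Fintype n₂] [DecidableEq n₂]
  [Fintype R] [DecidableEq R]

def etaR (ρ : Matrix ((n₁ × n₂) × R) ((n₁ × n₂) × R) ℂ) : Matrix (n₁ × n₂) (n₁ × n₂) ℂ :=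
  Matrix.of fun i j => ∑ r, ρ (i, r) (j, r)

def eta1 (ρ : Matrix ((n₁ × n₂) × R) ((n₁ × n₂) × R) ℂ) : Matrix n₁ n₁ ℂ :=
  Matrix.of fun a₁ b₁ => ∑ c, etaR ρ (a₁, c) (b₁, c)

def Gmat (V₁ : Matrix n₁ n₁ ℂ) (ρ : Matrix ((n₁ × n₂) × R) ((n₁ × n₂) × R) ℂ)
    (i₁ j₁ : n₁) : Matrix n₂ n₂ ℂ :=
  Matrix.of fun a₂ b₂ => ∑ b₁, ∑ a₁, V₁ i₁ a₁ * etaR ρ (a₁, a₂) (b₁, b₂) * star (V₁ j₁ b₁)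

lemma etaR_conjU (V₁ : Matrix n₁ n₁ ℂ) (V₂ : Matrix n₂ n₂ ℂ)
    (ρ : Matrix ((n₁ × n₂) × R) ((n₁ × n₂) × R) ℂ) (i j : n₁ × n₂) :
    ∑ r, conjU V₁ V₂ ρ (i, r) (j, r)
      = (kron V₁ V₂ * etaR ρ * star (kron V₁ V₂)) i j := by
  set K := kron V₁ V₂ with hK
  have hrhs : (K * etaR ρ * star K) i j
      = ∑ q', ∑ p', ∑ r, K i p' * ρ (p', r) (q', r) * star (K j q') := by
    rw [conj_entry_expand]
    refine Finset.sum_congr rfl fun q' _ => Finset.sum_congr rfl fun p' _ => ?_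
    show K i p' * (∑ r, ρ (p', r) (q', r)) * star (K j q') = _
    rw [Finset.mul_sum, Finset.sum_mul]
  rw [hrhs]
  have hlhs : ∀ r, conjU V₁ V₂ ρ (i, r) (j, r)
      = ∑ q', ∑ p', K i p' * ρ (p', r) (q', r) * star (K j q') := by
    intro r
    show ((bigUR (R := R) V₁ V₂) * ρ * (bigUR (R := R) V₁ V₂)ᴴ) (i, r) (j, r) = _
    rw [← Matrix.star_eq_conjTranspose, conj_entry_expand]
    rw [Fintype.sum_prod_type]
    refine Finset.sum_congr rfl fun q' _ => ?_
    have hterm : ∀ (s' : R) (p : (n₁ × n₂) × R),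
        bigUR V₁ V₂ (i, r) p * ρ p (q', s') * star (bigUR V₁ V₂ (j, r) (q', s'))
        = if r = s' then (if r = p.2 then K i p.1 * ρ p (q', s') * star (K j q') else 0) else 0 := by
      intro s' p
      show K i p.1 * (if r = p.2 then (1:ℂ) else 0) * ρ p (q', s')
          * star (K j q' * (if r = s' then (1:ℂ) else 0)) = _
      rw [star_mul']
      have h1 : star (if r = s' then (1:ℂ) else 0) = (if r = s' then (1:ℂ) else 0) := by
        split <;> simp
      rw [h1]
      by_cases h2 : r = s' <;> by_cases h3 : r = p.2 <;> simp [h2, h3] <;> ring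
    calc ∑ s', ∑ p, bigUR V₁ V₂ (i, r) p * ρ p (q', s') * star (bigUR V₁ V₂ (j, r) (q', s'))
        = ∑ s', if r = s' then
            (∑ p, if r = p.2 then K i p.1 * ρ p (q', s') * star (K j q') else 0) else 0 := by
          refine Finset.sum_congr rfl fun s' _ => ?_
          rw [Finset.sum_congr rfl fun p _ => hterm s' p]
          split
          · rfl
          · simp
      _ = ∑ p, if r = p.2 then K i p.1 * ρ p (q', r) * star (K j q') else 0 := by
          rw [Finset.sum_ite_eq]
          simp
      _ = ∑ p', K i p' * ρ (p', r) (q', r) * star (K j q') := by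
          rw [Fintype.sum_prod_type]
          refine Finset.sum_congr rfl fun p' _ => ?_
          rw [Finset.sum_ite_eq]
          simp
  rw [Finset.sum_congr rfl fun r _ => hlhs r]
  rw [swap12₃, swap23₃]

lemma kron_conj_entry (V₁ : Matrix n₁ n₁ ℂ) (V₂ : Matrix n₂ n₂ ℂ)
    (ρ : Matrix ((n₁ × n₂) × R) ((n₁ × n₂) × R) ℂ) (i j : n₁ × n₂) :
    (kron V₁ V₂ * etaR ρ * star (kron V₁ V₂)) i j
      = (V₂ * Gmat V₁ ρ i.1 j.1 * star V₂) i.2 j.2 := by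
  rw [conj_entry_expand, conj_entry_expand]
  rw [Fintype.sum_prod_type]
  calc ∑ q₁, ∑ q₂, ∑ p, kron V₁ V₂ i p * etaR ρ p (q₁, q₂) * star (kron V₁ V₂ j (q₁, q₂))
      = ∑ q₁, ∑ q₂, ∑ p₁, ∑ p₂, V₂ i.2 p₂ *
          (V₁ i.1 p₁ * etaR ρ (p₁, p₂) (q₁, q₂) * star (V₁ j.1 q₁)) * star (V₂ j.2 q₂) := by
        refine Finset.sum_congr rfl fun q₁ _ => Finset.sum_congr rfl fun q₂ _ => ?_
        rw [Fintype.sum_prod_type]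
        refine Finset.sum_congr rfl fun p₁ _ => Finset.sum_congr rfl fun p₂ _ => ?_
        show V₁ i.1 p₁ * V₂ i.2 p₂ * etaR ρ (p₁, p₂) (q₁, q₂)
            * star (V₁ j.1 q₁ * V₂ j.2 q₂) = _
        rw [star_mul']
        ring
    _ = ∑ q₂, ∑ p₂, ∑ q₁, ∑ p₁, V₂ i.2 p₂ *
          (V₁ i.1 p₁ * etaR ρ (p₁, p₂) (q₁, q₂) * star (V₁ j.1 q₁)) * star (V₂ j.2 q₂) :=
        reorder4 _
    _ = ∑ q₂, ∑ p₂, V₂ i.2 p₂ * Gmat V₁ ρ i.1 j.1 p₂ q₂ * star (V₂ j.2 q₂) := by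
        refine Finset.sum_congr rfl fun q₂ _ => Finset.sum_congr rfl fun p₂ _ => ?_
        show _ = V₂ i.2 p₂ * (∑ b₁, ∑ a₁, V₁ i.1 a₁ * etaR ρ (a₁, p₂) (b₁, q₂)
            * star (V₁ j.1 b₁)) * star (V₂ j.2 q₂)
        rw [Finset.mul_sum, Finset.sum_mul]
        refine Finset.sum_congr rfl fun b₁ _ => ?_
        rw [Finset.mul_sum, Finset.sum_mul]

lemma Gmat_trace (V₁ : Matrix n₁ n₁ ℂ) (ρ : Matrix ((n₁ × n₂) × R) ((n₁ × n₂) × R) ℂ)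
    (i₁ j₁ : n₁) :
    (Gmat V₁ ρ i₁ j₁).trace = (V₁ * eta1 ρ * star V₁) i₁ j₁ := by
  rw [conj_entry_expand, Matrix.trace]
  have h1 : ∀ c, (Gmat V₁ ρ i₁ j₁).diag c
      = ∑ b₁, ∑ a₁, V₁ i₁ a₁ * etaR ρ (a₁, c) (b₁, c) * star (V₁ j₁ b₁) := fun c => rfl
  rw [Finset.sum_congr rfl fun c _ => h1 c]
  rw [swap12₃]
  refine Finset.sum_congr rfl fun b₁ _ => ?_
  rw [Finset.sum_comm]
  refine Finset.sum_congr rfl fun a₁ _ => ?_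
  show ∑ c, V₁ i₁ a₁ * etaR ρ (a₁, c) (b₁, c) * star (V₁ j₁ b₁)
      = V₁ i₁ a₁ * eta1 ρ a₁ b₁ * star (V₁ j₁ b₁)
  show _ = V₁ i₁ a₁ * (∑ c, etaR ρ (a₁, c) (b₁, c)) * star (V₁ j₁ b₁)
  rw [Finset.mul_sum, Finset.sum_mul]

lemma eta1_trace (ρ : Matrix ((n₁ × n₂) × R) ((n₁ × n₂) × R) ℂ) :
    (eta1 ρ).trace = ρ.trace := by
  rw [Matrix.trace, Matrix.trace]
  have h1 : ∀ a₁, (eta1 ρ).diag a₁ = ∑ c, ∑ r, ρ ((a₁, c), r) ((a₁, c), r) := fun a₁ => rfl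
  rw [Finset.sum_congr rfl fun a₁ _ => h1 a₁]
  conv_rhs => rw [Fintype.sum_prod_type]
  conv_rhs => rw [Fintype.sum_prod_type]
  rfl

end AuxEta


/-- Perturbation stability of decoupling under smoothing of the superoperator:
if the Choi states of the completely positive maps `T, T'` are `ε`-close in trace
distance, then the Haar-expected trace distance of the outputs is at most `ε`. -/
theorem decoupling_perturbation {n₁ n₂ bB R : Type*}
    [Fintype n₁] [DecidableEq n₁] [Fintype n₂] [DecidableEq n₂]
    [Fintype bB] [DecidableEq bB] [Fintype R] [DecidableEq R] {ε : ℝ}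
    (T T' : Matrix ((n₁ × n₂)) ((n₁ × n₂)) ℂ →ₗ[ℂ] Matrix bB bB ℂ)
    (hT : (choi T).PosSemidef) (hT' : (choi T').PosSemidef)
    (hclose : trNorm (choi T' - choi T) ≤ ε)
    (ρ : Matrix ((n₁ × n₂) × R) ((n₁ × n₂) × R) ℂ) (hρ : ρ.PosSemidef) (hρ1 : ρ.trace = 1)
    (μ₁ : Measure (Matrix.unitaryGroup n₁ ℂ)) [IsProbabilityMeasure μ₁]
    (μ₂ : Measure (Matrix.unitaryGroup n₂ ℂ)) [IsProbabilityMeasure μ₂]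
    (hμ₁ : ∀ V : Matrix.unitaryGroup n₁ ℂ, μ₁.map (fun U => V * U) = μ₁)
    (hμ₂ : ∀ V : Matrix.unitaryGroup n₂ ℂ, μ₂.map (fun U => V * U) = μ₂) :
    (∫ U₁, ∫ U₂,
        trNorm (tensId (T' - T)
          (conjU (U₁ : Matrix n₁ n₁ ℂ) (U₂ : Matrix n₂ n₂ ℂ) ρ)) ∂μ₂ ∂μ₁) ≤ ε := by
  classical
  rcases isEmpty_or_nonempty ((n₁ × n₂) × R) with hE | hNE
  · exfalso
    have h0 : ρ.trace = 0 := by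
      rw [Matrix.trace]
      simp
    rw [hρ1] at h0
    exact one_ne_zero h0
  obtain ⟨z0⟩ := hNE
  haveI : Nonempty n₁ := ⟨z0.1.1⟩
  haveI : Nonempty n₂ := ⟨z0.1.2⟩
  have hc₁ : (Fintype.card n₁ : ℂ) ≠ 0 := by exact_mod_cast Fintype.card_ne_zero
  have hc₂ : (Fintype.card n₂ : ℂ) ≠ 0 := by exact_mod_cast Fintype.card_ne_zero
  have hΔ : (choi T' - choi T).IsHermitian := hT'.1.sub hT.1
  obtain ⟨P, N, hP, hN, hPN, hPNtr⟩ := posneg_decomp hΔ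
  set W : Matrix (n₁ × n₂) (n₁ × n₂) ℂ :=
    Matrix.of (fun i j => ∑ b, (P (i, b) (j, b) + N (i, b) (j, b))) with hW
  set η₁ : Matrix n₁ n₁ ℂ := eta1 ρ with hη₁
  set cA : ℂ := (Fintype.card (n₁ × n₂) : ℂ) with hcA
  -- pointwise bound
  have hpoint : ∀ (U₁ : Matrix.unitaryGroup n₁ ℂ) (U₂ : Matrix.unitaryGroup n₂ ℂ),
      trNorm (tensId (T' - T) (conjU (U₁ : Matrix n₁ n₁ ℂ) (U₂ : Matrix n₂ n₂ ℂ) ρ))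
        ≤ (cA * ∑ i, ∑ j, W i j *
            ((U₂ : Matrix n₂ n₂ ℂ) * Gmat (U₁ : Matrix n₁ n₁ ℂ) ρ i.1 j.1
              * star (U₂ : Matrix n₂ n₂ ℂ)) i.2 j.2).re := by
    intro U₁ U₂
    set σ := conjU (U₁ : Matrix n₁ n₁ ℂ) (U₂ : Matrix n₂ n₂ ℂ) ρ with hσdef
    have hσ : σ.PosSemidef :=
      hρ.mul_mul_conjTranspose_same (bigUR (U₁ : Matrix n₁ n₁ ℂ) (U₂ : Matrix n₂ n₂ ℂ))
    have hsplit : tensId (T' - T) σ = tensC P σ - tensC N σ := by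
      rw [tensId_eq_tensC_choi (T' - T) σ, choi_sub, ← hPN, tensC_sub]
    have hη : ∀ i j : n₁ × n₂, (∑ r, σ (i, r) (j, r))
        = ((U₂ : Matrix n₂ n₂ ℂ) * Gmat (U₁ : Matrix n₁ n₁ ℂ) ρ i.1 j.1
            * star (U₂ : Matrix n₂ n₂ ℂ)) i.2 j.2 := by
      intro i j
      rw [hσdef]
      rw [show (∑ r, conjU (U₁ : Matrix n₁ n₁ ℂ) (U₂ : Matrix n₂ n₂ ℂ) ρ (i, r) (j, r))
          = (kron (U₁ : Matrix n₁ n₁ ℂ) (U₂ : Matrix n₂ n₂ ℂ) * etaR ρ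
              * star (kron (U₁ : Matrix n₁ n₁ ℂ) (U₂ : Matrix n₂ n₂ ℂ))) i j
        from etaR_conjU _ _ _ i j]
      exact kron_conj_entry _ _ _ i j
    calc trNorm (tensId (T' - T) σ) = trNorm (tensC P σ - tensC N σ) := by rw [hsplit]
      _ ≤ (tensC P σ).trace.re + (tensC N σ).trace.re :=
          trNorm_sub_le (tensC_psd hP hσ) (tensC_psd hN hσ)
      _ = ((tensC P σ).trace + (tensC N σ).trace).re := by rw [Complex.add_re]
      _ = _ := by
          congr 1
          rw [tensC_trace P σ, tensC_trace N σ, ← mul_add]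
          congr 1
          rw [← Finset.sum_add_distrib]
          refine Finset.sum_congr rfl fun i _ => ?_
          rw [← Finset.sum_add_distrib]
          refine Finset.sum_congr rfl fun j _ => ?_
          rw [← add_mul, show (∑ b, P (i, b) (j, b)) + (∑ b, N (i, b) (j, b))
              = W i j from (Finset.sum_add_distrib).symm, hη i j]
  -- inner integral
  set H : Matrix.unitaryGroup n₁ ℂ → ℂ := fun U₁ => cA * ∑ i, ∑ j, W i j *
      (if i.2 = j.2 then ((U₁ : Matrix n₁ n₁ ℂ) * η₁ * star (U₁ : Matrix n₁ n₁ ℂ)) i.1 j.1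
        / (Fintype.card n₂ : ℂ) else 0) with hH
  have hinner : ∀ U₁ : Matrix.unitaryGroup n₁ ℂ,
      (∫ U₂, trNorm (tensId (T' - T)
          (conjU (U₁ : Matrix n₁ n₁ ℂ) (U₂ : Matrix n₂ n₂ ℂ) ρ)) ∂μ₂) ≤ (H U₁).re := by
    intro U₁
    set FC : Matrix.unitaryGroup n₂ ℂ → ℂ := fun U₂ => cA * ∑ i, ∑ j, W i j *
        ((U₂ : Matrix n₂ n₂ ℂ) * Gmat (U₁ : Matrix n₁ n₁ ℂ) ρ i.1 j.1
          * star (U₂ : Matrix n₂ n₂ ℂ)) i.2 j.2 with hFC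
    have hFCint : Integrable FC μ₂ := by
      refine Integrable.const_mul ?_ _
      refine integrable_finset_sum _ fun i _ => integrable_finset_sum _ fun j _ => ?_
      exact (integrable_conjEntry μ₂ _ i.2 j.2).const_mul _
    have hFCreint : Integrable (fun U₂ => (FC U₂).re) μ₂ := by
      have := hFCint.re
      simpa using this
    have hmono : (∫ U₂, trNorm (tensId (T' - T)
        (conjU (U₁ : Matrix n₁ n₁ ℂ) (U₂ : Matrix n₂ n₂ ℂ) ρ)) ∂μ₂)
        ≤ ∫ U₂, (FC U₂).re ∂μ₂ := by
      refine integral_mono_of_nonneg ?_ hFCreint ?_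
      · exact Filter.Eventually.of_forall fun U₂ => trNorm_nonneg _
      · exact Filter.Eventually.of_forall fun U₂ => hpoint U₁ U₂
    refine hmono.trans (le_of_eq ?_)
    have hre : ∫ U₂, (FC U₂).re ∂μ₂ = (∫ U₂, FC U₂ ∂μ₂).re := by
      have := integral_re hFCint
      simpa using this
    rw [hre]
    congr 1
    calc ∫ U₂, FC U₂ ∂μ₂
        = cA * ∫ U₂, ∑ i, ∑ j, W i j *
            ((U₂ : Matrix n₂ n₂ ℂ) * Gmat (U₁ : Matrix n₁ n₁ ℂ) ρ i.1 j.1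
              * star (U₂ : Matrix n₂ n₂ ℂ)) i.2 j.2 ∂μ₂ := integral_const_mul _ _
      _ = cA * ∑ i, ∑ j, W i j * (if i.2 = j.2 then
            (Gmat (U₁ : Matrix n₁ n₁ ℂ) ρ i.1 j.1).trace / (Fintype.card n₂ : ℂ) else 0) := by
          congr 1
          rw [integral_finset_sum _ (fun i _ => integrable_finset_sum _ fun j _ =>
            (integrable_conjEntry μ₂ _ i.2 j.2).const_mul _)]
          refine Finset.sum_congr rfl fun i _ => ?_
          rw [integral_finset_sum _ (fun j _ => (integrable_conjEntry μ₂ _ i.2 j.2).const_mul _)]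
          refine Finset.sum_congr rfl fun j _ => ?_
          rw [integral_const_mul]
          congr 1
          exact twirl μ₂ hμ₂ (Gmat (U₁ : Matrix n₁ n₁ ℂ) ρ i.1 j.1) i.2 j.2
      _ = H U₁ := by
          rw [hH]
          congr 1
          refine Finset.sum_congr rfl fun i _ => Finset.sum_congr rfl fun j _ => ?_
          rw [Gmat_trace]
  -- outer integral
  have hHint : Integrable H μ₁ := by
    refine Integrable.const_mul ?_ _
    refine integrable_finset_sum _ fun i _ => integrable_finset_sum _ fun j _ => ?_
    by_cases hij : i.2 = j.2
    · simp only [hij, if_true]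
      exact ((integrable_conjEntry μ₁ η₁ i.1 j.1).div_const _).const_mul _
    · simp only [hij, if_false]
      simpa using (integrable_const (0:ℂ)).const_mul (W i j)
  have hHreint : Integrable (fun U₁ => (H U₁).re) μ₁ := by
    have := hHint.re
    simpa using this
  have houter : (∫ U₁, ∫ U₂, trNorm (tensId (T' - T)
      (conjU (U₁ : Matrix n₁ n₁ ℂ) (U₂ : Matrix n₂ n₂ ℂ) ρ)) ∂μ₂ ∂μ₁)
      ≤ ∫ U₁, (H U₁).re ∂μ₁ := by
    refine integral_mono_of_nonneg ?_ hHreint ?_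
    · exact Filter.Eventually.of_forall fun U₁ =>
        integral_nonneg fun U₂ => trNorm_nonneg _
    · exact Filter.Eventually.of_forall fun U₁ => hinner U₁
  refine houter.trans ?_
  -- compute ∫ H
  have hHre : ∫ U₁, (H U₁).re ∂μ₁ = (∫ U₁, H U₁ ∂μ₁).re := by
    have := integral_re hHint
    simpa using this
  have hHval : ∫ U₁, H U₁ ∂μ₁ = P.trace + N.trace := by
    calc ∫ U₁, H U₁ ∂μ₁
        = cA * ∫ U₁, ∑ i, ∑ j, W i j * (if i.2 = j.2 then
            ((U₁ : Matrix n₁ n₁ ℂ) * η₁ * star (U₁ : Matrix n₁ n₁ ℂ)) i.1 j.1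
              / (Fintype.card n₂ : ℂ) else 0) ∂μ₁ := integral_const_mul _ _
      _ = cA * ∑ i, ∑ j, W i j * (if i.2 = j.2 then
            (if i.1 = j.1 then η₁.trace / (Fintype.card n₁ : ℂ) else 0)
              / (Fintype.card n₂ : ℂ) else 0) := by
          congr 1
          rw [integral_finset_sum]
          swap
          · intro i _
            refine integrable_finset_sum _ fun j _ => ?_
            by_cases hij : i.2 = j.2
            · simp only [hij, if_true]
              exact ((integrable_conjEntry μ₁ η₁ i.1 j.1).div_const _).const_mul _
            · simp only [hij, if_false]
              simpa using (integrable_const (0:ℂ)).const_mul (W i j)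
          refine Finset.sum_congr rfl fun i _ => ?_
          rw [integral_finset_sum]
          swap
          · intro j _
            by_cases hij : i.2 = j.2
            · simp only [hij, if_true]
              exact ((integrable_conjEntry μ₁ η₁ i.1 j.1).div_const _).const_mul _
            · simp only [hij, if_false]
              simpa using (integrable_const (0:ℂ)).const_mul (W i j)
          refine Finset.sum_congr rfl fun j _ => ?_
          by_cases hij : i.2 = j.2
          · simp only [hij, if_true]
            rw [integral_const_mul, integral_div]
            congr 2
            exact twirl μ₁ hμ₁ η₁ i.1 j.1
          · simp only [hij, if_false]
            simp
      _ = cA * ∑ i, W i i * (η₁.trace / (Fintype.card n₁ : ℂ) / (Fintype.card n₂ : ℂ)) := by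
          congr 1
          refine Finset.sum_congr rfl fun i _ => ?_
          rw [Finset.sum_eq_single i]
          · simp
          · intro j _ hji
            by_cases h2 : i.2 = j.2
            · have h1 : i.1 ≠ j.1 := by
                intro h1'
                exact hji (Prod.ext h1'.symm h2.symm)
              simp [h2, h1]
            · simp [h2]
          · intro h; exact absurd (Finset.mem_univ i) h
      _ = P.trace + N.trace := by
          have hWsum : ∑ i, W i i = P.trace + N.trace := by
            rw [Matrix.trace, Matrix.trace, ← Finset.sum_add_distrib]
            conv_rhs => rw [Fintype.sum_prod_type]
            refine Finset.sum_congr rfl fun i _ => ?_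
            show ∑ b, (P (i, b) (i, b) + N (i, b) (i, b)) = _
            exact Finset.sum_congr rfl fun b _ => rfl
          rw [← Finset.sum_mul, hWsum, eta1_trace, hρ1]
          rw [hcA]
          have hcardprod : (Fintype.card (n₁ × n₂) : ℂ)
              = (Fintype.card n₁ : ℂ) * (Fintype.card n₂ : ℂ) := by
            rw [Fintype.card_prod]
            push_cast
            ring
          rw [hcardprod]
          field_simp
  rw [hHre, hHval]
  rw [Complex.add_re, hPNtr]
  exact hclose
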